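/- Let 0 < α < 1 and let φ : ℝ^L → ℝ^L be continuous and K-Lipschitz componentwise (in the ℓ¹ sense) for some K > 0. Then for every initial value x₀ ∈ ℝ^L, the nonlinear Volterra integral equation of the second kind x(t) = x₀ + (1/Γ(α)) ∫_0^t (t−s)^{α−1} φ(x(s)) ds, t ∈ [0,T], has exactly one continuous solution x : [0,T] → ℝ^L. -/

import Mathlib

open scoped BigOperators

open MeasureTheory Set Real Filter Topology

section AUX

lemma volt_integrable {α : ℝ} (hα : 0 < α) (t : ℝ) (ψ : ℝ → ℝ) (hψ : Continuous ψ) :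
    IntervalIntegrable (fun s => (t - s) ^ (α - 1) * ψ s) volume 0 t := by
  have h1 : IntervalIntegrable (fun x : ℝ => x ^ (α - 1)) volume 0 t :=
    intervalIntegral.intervalIntegrable_rpow' (by linarith)
  have h2 := (h1.comp_sub_left t)
  simp only [sub_zero, sub_self] at h2
  exact h2.symm.mul_continuousOn hψ.continuousOn

lemma volt_kernel_exp_bound {α : ℝ} (hα : 0 < α) {lam t : ℝ} (hlam : 0 < lam) (ht : 0 ≤ t) :
    ∫ s in (0:ℝ)..t, (t - s) ^ (α - 1) * Real.exp (lam * s)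
      ≤ Real.exp (lam * t) * (Real.Gamma α / lam ^ α) := by
  have h1 : (∫ s in (0:ℝ)..t, (t - s) ^ (α - 1) * Real.exp (lam * s))
      = ∫ u in (0:ℝ)..t, u ^ (α - 1) * Real.exp (lam * (t - u)) := by
    have := intervalIntegral.integral_comp_sub_left
      (a := 0) (b := t) (fun u => u ^ (α - 1) * Real.exp (lam * (t - u))) t
    simp only [sub_sub_cancel, sub_zero, sub_self] at this
    exact this
  have h2 : (∫ u in (0:ℝ)..t, u ^ (α - 1) * Real.exp (lam * (t - u)))
      = Real.exp (lam * t) * ∫ u in (0:ℝ)..t, u ^ (α - 1) * Real.exp (-(lam * u)) := by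
    rw [← intervalIntegral.integral_const_mul]
    refine intervalIntegral.integral_congr fun u _ => ?_
    rw [mul_sub, Real.exp_sub, Real.exp_neg]
    ring
  rw [h1, h2]
  have hInt : IntegrableOn (fun u : ℝ => u ^ (α - 1) * Real.exp (-(lam * u))) (Ioi 0) := by
    have := integrableOn_rpow_mul_exp_neg_mul_rpow (p := 1) (s := α - 1) (b := lam)
      (by linarith) zero_lt_one hlam
    simpa [Real.rpow_one, neg_mul] using this
  have h3 : (∫ u in (0:ℝ)..t, u ^ (α - 1) * Real.exp (-(lam * u)))
      ≤ Real.Gamma α / lam ^ α := by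
    rw [intervalIntegral.integral_of_le ht]
    have hmono : (∫ u in Ioc (0:ℝ) t, u ^ (α - 1) * Real.exp (-(lam * u)))
        ≤ ∫ u in Ioi (0:ℝ), u ^ (α - 1) * Real.exp (-(lam * u)) := by
      refine setIntegral_mono_set hInt ?_ (HasSubset.Subset.eventuallyLE Ioc_subset_Ioi_self)
      filter_upwards [ae_restrict_mem measurableSet_Ioi] with u hu
      exact mul_nonneg (Real.rpow_nonneg (le_of_lt hu) _) (Real.exp_nonneg _)
    refine hmono.trans_eq ?_
    rw [Real.integral_rpow_mul_exp_neg_mul_Ioi hα hlam]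
    rw [Real.div_rpow zero_le_one hlam.le, Real.one_rpow]
    ring
  calc Real.exp (lam * t) * ∫ u in (0:ℝ)..t, u ^ (α - 1) * Real.exp (-(lam * u))
      ≤ Real.exp (lam * t) * (Real.Gamma α / lam ^ α) := by
        exact mul_le_mul_of_nonneg_left h3 (Real.exp_nonneg _)

lemma volt_continuousOn {α T : ℝ} (hα : 0 < α) (hα1 : α < 1) (hT : 0 < T)
    (ψ : ℝ → ℝ) (hψ : Continuous ψ) :
    ContinuousOn (fun t => ∫ s in (0:ℝ)..t, (t - s) ^ (α - 1) * ψ s) (Icc 0 T) := by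
  obtain ⟨M, hM⟩ := isCompact_Icc.exists_bound_of_continuousOn
    (f := ψ) (s := Icc (0:ℝ) T) hψ.continuousOn
  have hM0 : 0 ≤ M := le_trans (norm_nonneg _) (hM 0 ⟨le_refl _, hT.le⟩)
  set F : ℝ → ℝ → ℝ :=
    fun t u => (Ioc (0:ℝ) t).indicator (fun u => |u| ^ (α - 1) * ψ (t - u)) u with hF
  have hrepr : ∀ t ∈ Icc (0:ℝ) T,
      (∫ s in (0:ℝ)..t, (t - s) ^ (α - 1) * ψ s) = ∫ u, F t u := by
    intro t ht
    have e1 : (∫ s in (0:ℝ)..t, (t - s) ^ (α - 1) * ψ s)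
        = ∫ u in (0:ℝ)..t, u ^ (α - 1) * ψ (t - u) := by
      have := intervalIntegral.integral_comp_sub_left (a := (0:ℝ)) (b := t)
        (fun u => u ^ (α - 1) * ψ (t - u)) t
      simp only [sub_sub_cancel, sub_zero, sub_self] at this
      exact this
    have e2 : (∫ u in (0:ℝ)..t, u ^ (α - 1) * ψ (t - u))
        = ∫ u in (0:ℝ)..t, |u| ^ (α - 1) * ψ (t - u) := by
      refine intervalIntegral.integral_congr fun u hu => ?_
      rw [uIcc_of_le ht.1] at hu
      rw [abs_of_nonneg hu.1]
    rw [e1, e2, intervalIntegral.integral_of_le ht.1,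
      ← MeasureTheory.integral_indicator measurableSet_Ioc]
  have hmeas : ∀ t : ℝ, AEStronglyMeasurable (F t) volume := by
    intro t
    refine (Measurable.indicator ?_ measurableSet_Ioc).aestronglyMeasurable
    have h1 : Measurable fun u : ℝ => |u| ^ (α - 1) := by fun_prop
    exact h1.mul (hψ.measurable.comp (measurable_const.sub measurable_id))
  set bound : ℝ → ℝ := (Ioc (0:ℝ) T).indicator (fun u => |u| ^ (α - 1) * M) with hbd
  have hbound_nonneg : ∀ u, 0 ≤ bound u :=
    fun u => indicator_nonneg
      (fun u _ => mul_nonneg (Real.rpow_nonneg (abs_nonneg _) _) hM0) u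
  have hbound_int : Integrable bound := by
    rw [hbd, integrable_indicator_iff measurableSet_Ioc]
    have h1 : IntegrableOn (fun u : ℝ => u ^ (α - 1)) (Ioc 0 T) := by
      rw [← intervalIntegrable_iff_integrableOn_Ioc_of_le hT.le]
      exact intervalIntegral.intervalIntegrable_rpow' (by linarith)
    have h2 : IntegrableOn (fun u : ℝ => |u| ^ (α - 1)) (Ioc 0 T) :=
      h1.congr_fun (fun u hu => by rw [abs_of_nonneg hu.1.le]) measurableSet_Ioc
    exact h2.mul_const M
  intro t₀ ht₀
  have key := MeasureTheory.tendsto_integral_filter_of_dominated_convergence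
    (μ := volume) (F := F) (f := F t₀) (l := nhdsWithin t₀ (Icc 0 T)) bound
    (Eventually.of_forall fun t => hmeas t) ?_ hbound_int ?_
  · have heq : (fun t => ∫ u, F t u) =ᶠ[nhdsWithin t₀ (Icc 0 T)]
        (fun t => ∫ s in (0:ℝ)..t, (t - s) ^ (α - 1) * ψ s) := by
      filter_upwards [eventually_mem_nhdsWithin] with t ht using (hrepr t ht).symm
    have : Tendsto (fun t => ∫ s in (0:ℝ)..t, (t - s) ^ (α - 1) * ψ s)
        (nhdsWithin t₀ (Icc 0 T)) (𝓝 (∫ u, F t₀ u)) := key.congr' heq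
    rw [← hrepr t₀ ht₀] at this
    exact this
  · -- bound
    filter_upwards [eventually_mem_nhdsWithin] with t ht
    refine Eventually.of_forall fun u => ?_
    by_cases hu : u ∈ Ioc 0 t
    · rw [hF]
      simp only [indicator_of_mem hu]
      have huT : u ∈ Ioc (0:ℝ) T := ⟨hu.1, hu.2.trans ht.2⟩
      rw [hbd]
      simp only [indicator_of_mem huT]
      rw [Real.norm_eq_abs, abs_mul, abs_of_nonneg (Real.rpow_nonneg (abs_nonneg _) _)]
      refine mul_le_mul_of_nonneg_left ?_ (Real.rpow_nonneg (abs_nonneg _) _)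
      have htu : t - u ∈ Icc (0:ℝ) T := ⟨by linarith [hu.2], by linarith [hu.1, ht.2]⟩
      simpa [Real.norm_eq_abs] using hM _ htu
    · rw [hF]
      simp only [indicator_of_notMem hu]
      simpa using hbound_nonneg u
  · -- pointwise limit
    have hae : ∀ᵐ u : ℝ, u ≠ 0 ∧ u ≠ t₀ := by
      have h0 : ∀ᵐ u : ℝ, u ≠ (0:ℝ) := by
        rw [MeasureTheory.ae_iff]
        simpa using Real.volume_singleton
      have h1 : ∀ᵐ u : ℝ, u ≠ t₀ := by
        rw [MeasureTheory.ae_iff]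
        simpa using Real.volume_singleton
      exact h0.and h1
    filter_upwards [hae] with u hu
    by_cases hupos : 0 < u
    · by_cases hut : u < t₀
      · have hev : ∀ᶠ t in nhdsWithin t₀ (Icc 0 T),
            F t u = |u| ^ (α - 1) * ψ (t - u) := by
          filter_upwards [(eventually_gt_nhds hut).filter_mono nhdsWithin_le_nhds] with t htu
          exact Set.indicator_of_mem (show u ∈ Ioc 0 t from ⟨hupos, htu.le⟩) _
        have hval : F t₀ u = |u| ^ (α - 1) * ψ (t₀ - u) :=
          Set.indicator_of_mem (show u ∈ Ioc 0 t₀ from ⟨hupos, hut.le⟩) _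
        rw [hval]
        refine Tendsto.congr' (EventuallyEq.symm hev) ?_
        have : Tendsto (fun t : ℝ => ψ (t - u)) (𝓝 t₀) (𝓝 (ψ (t₀ - u))) :=
          (hψ.tendsto _).comp ((continuous_id.sub continuous_const).tendsto t₀)
        exact (tendsto_const_nhds.mul this).mono_left nhdsWithin_le_nhds
      · have hut' : t₀ < u := lt_of_le_of_ne (not_lt.1 hut) (Ne.symm hu.2)
        have hev : ∀ᶠ t in nhdsWithin t₀ (Icc 0 T), F t u = 0 := by
          filter_upwards [(eventually_lt_nhds hut').filter_mono nhdsWithin_le_nhds] with t htu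
          exact indicator_of_notMem (fun hmem => absurd hmem.2 (not_le.2 htu)) _
        have hval : F t₀ u = 0 :=
          indicator_of_notMem (fun hmem => absurd hmem.2 (not_le.2 hut')) _
        rw [hval]
        exact Tendsto.congr' (EventuallyEq.symm hev) tendsto_const_nhds
    · have : ∀ t, F t u = 0 :=
        fun t => indicator_of_notMem (fun hmem => hupos hmem.1) _
      simp only [this]
      exact tendsto_const_nhds

set_option maxHeartbeats 1000000 in
/-- For `0 < α < 1` and `φ : ℝ^L → ℝ^L` continuous and `K`-Lipschitz
componentwise (in the ℓ¹ sense) with `K > 0`, for every initial value `x₀ ∈ ℝ^L` the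
nonlinear Volterra integral equation of the second kind
`x(t) = x₀ + (1/Γ(α)) ∫_0^t (t-s)^{α-1} φ(x(s)) ds`, `t ∈ [0,T]`,
has exactly one continuous solution `x : [0,T] → ℝ^L` (unique up to its values on `[0,T]`). -/
theorem volterra_equation_exists_unique_solution
    (T : ℝ) (hT : 0 < T) (L : ℕ) (hL : 1 ≤ L) (α : ℝ) (hα : 0 < α) (hα1 : α < 1)
    (K : ℝ) (hK : 0 < K)
    (φ : (Fin L → ℝ) → (Fin L → ℝ)) (hφc : Continuous φ)
    (hφ : ∀ (k : Fin L) (u v : Fin L → ℝ), |φ u k - φ v k| ≤ K * ∑ j : Fin L, |u j - v j|)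
    (x₀ : Fin L → ℝ) :
    ∃ x : ℝ → Fin L → ℝ,
      (ContinuousOn x (Set.Icc 0 T) ∧
        ∀ t ∈ Set.Icc (0:ℝ) T, ∀ k : Fin L,
          x t k = x₀ k + (1 / Real.Gamma α) * ∫ s in (0:ℝ)..t, (t - s) ^ (α - 1) * φ (x s) k)
      ∧
      ∀ y : ℝ → Fin L → ℝ,
        (ContinuousOn y (Set.Icc 0 T) ∧
          ∀ t ∈ Set.Icc (0:ℝ) T, ∀ k : Fin L,
            y t k = x₀ k + (1 / Real.Gamma α) * ∫ s in (0:ℝ)..t, (t - s) ^ (α - 1) * φ (y s) k)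
        → ∀ t ∈ Set.Icc (0:ℝ) T, y t = x t := by
  have hΓ : 0 < Real.Gamma α := Real.Gamma_pos_of_pos hα
  set c : ℝ := 1 / Real.Gamma α with hc
  have hc0 : 0 < c := by positivity
  have hL0 : (0:ℝ) < (L:ℝ) := by exact_mod_cast Nat.lt_of_lt_of_le Nat.zero_lt_one hL
  have h2KL : 0 < 2 * K * (L:ℝ) := by positivity
  set lam : ℝ := (2 * K * (L:ℝ)) ^ (α⁻¹ : ℝ) with hlamdef
  have hlam0 : 0 < lam := Real.rpow_pos_of_pos h2KL _
  have hlam_pow : lam ^ α = 2 * K * (L:ℝ) := Real.rpow_inv_rpow h2KL.le (ne_of_gt hα)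
  haveI : Nonempty (Set.Icc (0:ℝ) T) := ⟨⟨0, le_refl 0, hT.le⟩⟩
  haveI : Nonempty C(Set.Icc (0:ℝ) T, Fin L → ℝ) := ⟨ContinuousMap.const _ (fun _ => 0)⟩
  -- extension operator
  let extd : C(Set.Icc (0:ℝ) T, Fin L → ℝ) → ℝ → (Fin L → ℝ) :=
    fun f => Set.IccExtend hT.le f
  have hext_cont : ∀ f, Continuous (extd f) :=
    fun f => f.continuous.comp continuous_projIcc
  have hext_eq : ∀ (f : C(Set.Icc (0:ℝ) T, Fin L → ℝ)) (s : ℝ) (hs : s ∈ Set.Icc (0:ℝ) T),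
      extd f s = f ⟨s, hs⟩ := fun f s hs => Set.IccExtend_of_mem hT.le f hs
  have hpsi : ∀ (f : C(Set.Icc (0:ℝ) T, Fin L → ℝ)) (k : Fin L),
      Continuous fun s => φ (extd f s) k :=
    fun f k => (continuous_apply k).comp (hφc.comp (hext_cont f))
  -- the Picard operator
  let P : C(Set.Icc (0:ℝ) T, Fin L → ℝ) → C(Set.Icc (0:ℝ) T, Fin L → ℝ) := fun f =>
    ⟨fun t => fun k =>
        x₀ k + c * ∫ s in (0:ℝ)..(t:ℝ), ((t:ℝ) - s) ^ (α - 1) * φ (extd f s) k,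
      by
        refine continuous_pi fun k => ?_
        refine continuous_const.add (continuous_const.mul ?_)
        exact (volt_continuousOn hα hα1 hT _ (hpsi f k)).restrict⟩
  have hPapp : ∀ (f : C(Set.Icc (0:ℝ) T, Fin L → ℝ)) (t : Set.Icc (0:ℝ) T) (k : Fin L),
      (P f) t k = x₀ k + c * ∫ s in (0:ℝ)..(t:ℝ), ((t:ℝ) - s) ^ (α - 1) * φ (extd f s) k :=
    fun f t k => rfl
  -- key iterate estimate
  have key : ∀ (f g : C(Set.Icc (0:ℝ) T, Fin L → ℝ)) (n : ℕ) (t : Set.Icc (0:ℝ) T),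
      dist ((P^[n] f) t) ((P^[n] g) t)
        ≤ dist f g * (1/2)^n * Real.exp (lam * (t:ℝ)) := by
    intro f g n
    induction n with
    | zero =>
      intro t
      simp only [Function.iterate_zero, id, pow_zero]
      have h1 : dist (f t) (g t) ≤ dist f g := ContinuousMap.dist_apply_le_dist t
      have h2 : (1:ℝ) ≤ Real.exp (lam * (t:ℝ)) :=
        Real.one_le_exp (mul_nonneg hlam0.le t.2.1)
      nlinarith [dist_nonneg (x := f t) (y := g t), dist_nonneg (x := f) (y := g)]
    | succ n ih =>
      intro t
      rw [Function.iterate_succ_apply', Function.iterate_succ_apply']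
      have hD0 : (0:ℝ) ≤ dist f g := dist_nonneg
      set D := dist f g with hD
      set Cn : ℝ := D * (1/2)^n with hCn
      have hCn0 : 0 ≤ Cn := by positivity
      have ht0 : (0:ℝ) ≤ (t:ℝ) := t.2.1
      have htT : (t:ℝ) ≤ T := t.2.2
      have hgoal : D * (1/2)^(n+1) * Real.exp (lam * (t:ℝ))
          = Cn/2 * Real.exp (lam * (t:ℝ)) := by rw [hCn]; ring
      rw [hgoal]
      have hexp0 : (0:ℝ) < Real.exp (lam * (t:ℝ)) := Real.exp_pos _
      refine (dist_pi_le_iff (by positivity)).2 fun k => ?_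
      rw [Real.dist_eq, hPapp, hPapp]
      set f' := P^[n] f with hf'
      set g' := P^[n] g with hg'
      set I1 : ℝ := ∫ s in (0:ℝ)..(t:ℝ), ((t:ℝ) - s) ^ (α - 1) * φ (extd f' s) k with hI1
      set I2 : ℝ := ∫ s in (0:ℝ)..(t:ℝ), ((t:ℝ) - s) ^ (α - 1) * φ (extd g' s) k with hI2
      have hint1 : IntervalIntegrable
          (fun s => ((t:ℝ) - s) ^ (α - 1) * φ (extd f' s) k) volume 0 (t:ℝ) :=
        volt_integrable hα _ _ (hpsi f' k)
      have hint2 : IntervalIntegrable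
          (fun s => ((t:ℝ) - s) ^ (α - 1) * φ (extd g' s) k) volume 0 (t:ℝ) :=
        volt_integrable hα _ _ (hpsi g' k)
      have habs : |x₀ k + c * I1 - (x₀ k + c * I2)| = c * |I1 - I2| := by
        rw [show x₀ k + c * I1 - (x₀ k + c * I2) = c * (I1 - I2) by ring, abs_mul,
          abs_of_pos hc0]
      rw [habs]
      have hsub : I1 - I2 = ∫ s in (0:ℝ)..(t:ℝ),
          (((t:ℝ) - s) ^ (α - 1) * φ (extd f' s) k
            - ((t:ℝ) - s) ^ (α - 1) * φ (extd g' s) k) := by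
        rw [hI1, hI2, intervalIntegral.integral_sub hint1 hint2]
      have h_abs_int : |I1 - I2| ≤ ∫ s in (0:ℝ)..(t:ℝ),
          ((t:ℝ) - s) ^ (α - 1) * |φ (extd f' s) k - φ (extd g' s) k| := by
        rw [hsub]
        refine le_trans (intervalIntegral.abs_integral_le_integral_abs ht0) (le_of_eq ?_)
        refine intervalIntegral.integral_congr fun s hs => ?_
        rw [uIcc_of_le ht0] at hs
        rw [show ((t:ℝ) - s) ^ (α - 1) * φ (extd f' s) k
              - ((t:ℝ) - s) ^ (α - 1) * φ (extd g' s) k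
            = ((t:ℝ) - s) ^ (α - 1) * (φ (extd f' s) k - φ (extd g' s) k) by ring,
          abs_mul, abs_of_nonneg (Real.rpow_nonneg (sub_nonneg.2 hs.2) _)]
      have h_pt : ∀ s ∈ Set.Icc (0:ℝ) (t:ℝ),
          ((t:ℝ) - s) ^ (α - 1) * |φ (extd f' s) k - φ (extd g' s) k|
            ≤ ((t:ℝ) - s) ^ (α - 1) * (K * (L:ℝ) * Cn * Real.exp (lam * s)) := by
        intro s hs
        have hsT : s ∈ Set.Icc (0:ℝ) T := ⟨hs.1, hs.2.trans htT⟩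
        refine mul_le_mul_of_nonneg_left ?_ (Real.rpow_nonneg (sub_nonneg.2 hs.2) _)
        have hsum : (∑ j : Fin L, |extd f' s j - extd g' s j|)
            ≤ (L:ℝ) * dist (extd f' s) (extd g' s) := by
          have hj : ∀ j : Fin L, |extd f' s j - extd g' s j|
              ≤ dist (extd f' s) (extd g' s) := by
            intro j
            rw [← Real.dist_eq]
            exact dist_le_pi_dist _ _ j
          calc (∑ j : Fin L, |extd f' s j - extd g' s j|)
              ≤ ∑ _j : Fin L, dist (extd f' s) (extd g' s) :=
                Finset.sum_le_sum fun j _ => hj j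
            _ = (L:ℝ) * dist (extd f' s) (extd g' s) := by
                rw [Finset.sum_const, Finset.card_univ, Fintype.card_fin, nsmul_eq_mul]
        have hdist : dist (extd f' s) (extd g' s) ≤ Cn * Real.exp (lam * s) := by
          rw [hext_eq f' s hsT, hext_eq g' s hsT]
          exact ih ⟨s, hsT⟩
        calc |φ (extd f' s) k - φ (extd g' s) k|
            ≤ K * ∑ j : Fin L, |extd f' s j - extd g' s j| := hφ k _ _
          _ ≤ K * ((L:ℝ) * (Cn * Real.exp (lam * s))) := by
              refine mul_le_mul_of_nonneg_left ?_ hK.le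
              refine hsum.trans (mul_le_mul_of_nonneg_left hdist hL0.le)
          _ = K * (L:ℝ) * Cn * Real.exp (lam * s) := by ring
      have hint_mid : IntervalIntegrable
          (fun s => ((t:ℝ) - s) ^ (α - 1) * |φ (extd f' s) k - φ (extd g' s) k|)
          volume 0 (t:ℝ) :=
        volt_integrable hα _ _ (((hpsi f' k).sub (hpsi g' k)).abs)
      have hint_rhs : IntervalIntegrable
          (fun s => ((t:ℝ) - s) ^ (α - 1) * (K * (L:ℝ) * Cn * Real.exp (lam * s)))
          volume 0 (t:ℝ) :=
        volt_integrable hα _ _ (continuous_const.mul (Real.continuous_exp.comp (continuous_const.mul continuous_id)))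
      have h_mono := intervalIntegral.integral_mono_on ht0 hint_mid hint_rhs h_pt
      have h_pull : (∫ s in (0:ℝ)..(t:ℝ),
            ((t:ℝ) - s) ^ (α - 1) * (K * (L:ℝ) * Cn * Real.exp (lam * s)))
          = (K * (L:ℝ) * Cn) * ∫ s in (0:ℝ)..(t:ℝ),
              ((t:ℝ) - s) ^ (α - 1) * Real.exp (lam * s) := by
        rw [← intervalIntegral.integral_const_mul]
        exact intervalIntegral.integral_congr fun s _ => by ring
      have h_kernel := volt_kernel_exp_bound hα hlam0 ht0 (t := (t:ℝ)) (lam := lam)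
      have hfinal : c * |I1 - I2|
          ≤ c * ((K * (L:ℝ) * Cn) * (Real.exp (lam * (t:ℝ)) * (Real.Gamma α / lam ^ α))) := by
        refine mul_le_mul_of_nonneg_left ?_ hc0.le
        refine le_trans h_abs_int (le_trans h_mono (le_trans (le_of_eq h_pull) ?_))
        exact mul_le_mul_of_nonneg_left h_kernel (by positivity)
      refine hfinal.trans (le_of_eq ?_)
      rw [hlam_pow, hc]
      field_simp
  -- contraction of an iterate
  obtain ⟨N, hN⟩ : ∃ N : ℕ, (1/2:ℝ)^N < (Real.exp (lam * T))⁻¹ :=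
    exists_pow_lt_of_lt_one (by positivity) (by norm_num)
  have hCCr : Real.exp (lam * T) * (1/2:ℝ)^N < 1 := by
    have := mul_lt_mul_of_pos_left hN (Real.exp_pos (lam * T))
    rwa [mul_inv_cancel₀ (Real.exp_pos (lam * T)).ne'] at this
  set CC : NNReal := ⟨Real.exp (lam * T) * (1/2:ℝ)^N, by positivity⟩ with hCCdef
  have hCC1 : CC < 1 := by
    rw [← NNReal.coe_lt_coe, NNReal.coe_one]
    show Real.exp (lam * T) * (1/2:ℝ)^N < 1
    exact hCCr
  have hlip : LipschitzWith CC (P^[N]) := by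
    refine LipschitzWith.of_dist_le_mul fun f g => ?_
    have hnn : (0:ℝ) ≤ (CC:ℝ) * dist f g := mul_nonneg CC.2 dist_nonneg
    rw [ContinuousMap.dist_le hnn]
    intro t
    have h1 := key f g N t
    have h2 : Real.exp (lam * (t:ℝ)) ≤ Real.exp (lam * T) :=
      Real.exp_le_exp.2 (mul_le_mul_of_nonneg_left t.2.2 hlam0.le)
    have h3 : dist f g * (1/2:ℝ)^N * Real.exp (lam * (t:ℝ))
        ≤ dist f g * (1/2:ℝ)^N * Real.exp (lam * T) := by
      refine mul_le_mul_of_nonneg_left h2 (by positivity)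
    refine h1.trans (h3.trans (le_of_eq ?_))
    show dist f g * (1/2:ℝ)^N * Real.exp (lam * T)
        = Real.exp (lam * T) * (1/2:ℝ)^N * dist f g
    ring
  have hcontr : ContractingWith CC (P^[N]) := ⟨hCC1, hlip⟩
  set Ffix := hcontr.fixedPoint (P^[N]) with hFfix
  have hfixP : Function.IsFixedPt P Ffix := hcontr.isFixedPt_fixedPoint_iterate
  refine ⟨extd Ffix, ⟨(hext_cont Ffix).continuousOn, ?_⟩, ?_⟩
  · intro t ht k
    have h1 : extd Ffix t = Ffix ⟨t, ht⟩ := hext_eq Ffix t ht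
    have h2 : Ffix ⟨t, ht⟩ = (P Ffix) ⟨t, ht⟩ := by
      conv_lhs => rw [← hfixP]
    rw [h1, h2]
    exact hPapp Ffix ⟨t, ht⟩ k
  · rintro y ⟨hy1, hy2⟩ t ht
    set G : C(Set.Icc (0:ℝ) T, Fin L → ℝ) := ⟨(Set.Icc (0:ℝ) T).restrict y, hy1.restrict⟩
      with hG
    have hGfix : Function.IsFixedPt P G := by
      refine ContinuousMap.ext fun t' => funext fun k => ?_
      have e1 : (P G) t' k
          = x₀ k + c * ∫ s in (0:ℝ)..(t':ℝ), ((t':ℝ) - s) ^ (α - 1) * φ (extd G s) k :=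
        hPapp G t' k
      have e2 : G t' k = y (t':ℝ) k := rfl
      rw [e1, e2, hy2 (t':ℝ) t'.2 k]
      congr 1
      congr 1
      refine intervalIntegral.integral_congr fun s hs => ?_
      rw [uIcc_of_le t'.2.1] at hs
      have hsT : s ∈ Set.Icc (0:ℝ) T := ⟨hs.1, hs.2.trans t'.2.2⟩
      rw [hext_eq G s hsT]
      rfl
    have hGeq : G = Ffix := hcontr.fixedPoint_unique (hGfix.iterate N)
    have hy : y t = G ⟨t, ht⟩ := rfl
    rw [hy, hGeq]
    exact (hext_eq Ffix t ht).symm
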